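/- arXiv:1904.00840 — 2 statements merged into one kernel-verified Lean document; each statement's English description precedes it below -/
import Mathlib

section
/- Let X₁, X₂, X₃ be i.i.d. Exp(1) random variables. Then max(X₁, X₂) and min(X₁, X₂) + X₃ have the same distribution. -/
open MeasureTheory ProbabilityTheory Real

open Set

lemma expMeasure_Iic {r : ℝ} (hr : 0 < r) (x : ℝ) :
    expMeasure r (Iic x) = ENNReal.ofReal (if 0 ≤ x then 1 - rexp (-(r*x)) else 0) := by
  rw [expMeasure, gammaMeasure, withDensity_apply _ measurableSet_Iic]
  exact lintegral_exponentialPDF_eq_antiDeriv hr x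

lemma key_integral (x : ℝ) :
    ∫ a in (0:ℝ)..x, (2*rexp (-(2*a)) * (1 - rexp (-(x-a)))) = (1 - rexp (-x))^2 := by
  have hderiv : ∀ a ∈ Set.uIcc (0:ℝ) x,
      HasDerivAt (fun a => -rexp (-(2*a)) + 2 * rexp (-x) * rexp (-a))
        (2*rexp (-(2*a)) * (1 - rexp (-(x-a)))) a := by
    intro a _
    have h1 : HasDerivAt (fun a : ℝ => -rexp (-(2*a))) (2*rexp (-(2*a))) a := by
      have := (((hasDerivAt_id a).const_mul (-2)).exp).neg
      simpa [neg_mul, mul_comm, Pi.neg_def] using this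
    have h2 : HasDerivAt (fun a : ℝ => 2 * rexp (-x) * rexp (-a))
        (2 * rexp (-x) * (-rexp (-a))) a := by
      have := (((hasDerivAt_id a).neg).exp).const_mul (2 * rexp (-x))
      simpa using this
    refine (h1.add h2).congr_deriv (Eq.symm ?_)
    have e1 : rexp (-(2*a)) * rexp (-(x-a)) = rexp (-x) * rexp (-a) := by
      rw [← Real.exp_add, ← Real.exp_add]; ring_nf
    linear_combination -2 * e1
  rw [intervalIntegral.integral_eq_sub_of_hasDerivAt hderiv
    (by apply Continuous.intervalIntegrable; continuity)]
  have e2 : rexp (-(2*x)) = rexp (-x) * rexp (-x) := by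
    rw [← Real.exp_add]; ring_nf
  simp only [mul_zero, neg_zero, Real.exp_zero, mul_one]
  linear_combination -e2

/-- Milošević–Obradović characterization, forward direction: for i.i.d. Exp(1) variables
`X 0, X 1, X 2`, `max (X 0, X 1)` and `min (X 0, X 1) + X 2` have the same distribution. -/
theorem milosevic_obradovic_forward {Ω : Type*} [MeasurableSpace Ω] (μ : Measure Ω)
    [IsProbabilityMeasure μ]
    (X : Fin 3 → Ω → ℝ) (hX : ∀ i, Measurable (X i))
    (hind : iIndepFun X μ)
    (hexp : ∀ i, μ.map (X i) = expMeasure 1) :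
    μ.map (fun ω => max (X 0 ω) (X 1 ω)) =
      μ.map (fun ω => min (X 0 ω) (X 1 ω) + X 2 ω) := by
  have h01 : IndepFun (X 0) (X 1) μ := hind.indepFun (by decide)
  have hmaxm : Measurable fun ω => max (X 0 ω) (X 1 ω) := (hX 0).max (hX 1)
  have hminm : Measurable fun ω => min (X 0 ω) (X 1 ω) := (hX 0).min (hX 1)
  have hXiIic : ∀ i x, μ (X i ⁻¹' Iic x)
      = ENNReal.ofReal (if 0 ≤ x then 1 - rexp (-x) else 0) := by
    intro i x
    rw [← Measure.map_apply (hX i) measurableSet_Iic, hexp i, expMeasure_Iic one_pos x]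
    simp
  have hXiIoi : ∀ i x, 0 ≤ x → μ (X i ⁻¹' Ioi x) = ENNReal.ofReal (rexp (-x)) := by
    intro i x hx
    have hs : X i ⁻¹' Ioi x = (X i ⁻¹' Iic x)ᶜ := by
      ext ω; simp [not_le]
    have hle : rexp (-x) ≤ 1 := Real.exp_le_one_iff.2 (by linarith)
    rw [hs, measure_compl ((hX i) measurableSet_Iic) (measure_ne_top μ _), measure_univ,
      hXiIic, if_pos hx, ← ENNReal.ofReal_one,
      ← ENNReal.ofReal_sub _ (by linarith)]
    norm_num
  -- law of the min
  have hminlaw : μ.map (fun ω => min (X 0 ω) (X 1 ω)) = expMeasure 2 := by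
    have i1 : IsProbabilityMeasure (μ.map (fun ω => min (X 0 ω) (X 1 ω))) :=
      Measure.isProbabilityMeasure_map hminm.aemeasurable
    have i2 : IsProbabilityMeasure (expMeasure 2) := isProbabilityMeasure_expMeasure two_pos
    refine Measure.ext_of_Iic _ _ (fun a => ?_)
    rw [Measure.map_apply hminm measurableSet_Iic, expMeasure_Iic two_pos]
    by_cases ha : 0 ≤ a
    · rw [if_pos ha]
      have hset : (fun ω => min (X 0 ω) (X 1 ω)) ⁻¹' Iic a
          = ((X 0 ⁻¹' Ioi a) ∩ (X 1 ⁻¹' Ioi a))ᶜ := by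
        ext ω
        simp only [mem_preimage, mem_Iic, min_le_iff, mem_compl_iff, mem_inter_iff, mem_Ioi,
          not_and_or, not_lt]
      rw [hset, measure_compl (((hX 0) measurableSet_Ioi).inter ((hX 1) measurableSet_Ioi))
        (measure_ne_top μ _), measure_univ,
        (indepFun_iff_measure_inter_preimage_eq_mul.1 h01) _ _ measurableSet_Ioi
          measurableSet_Ioi,
        hXiIoi 0 a ha, hXiIoi 1 a ha, ← ENNReal.ofReal_mul (by positivity)]
      have e2 : rexp (-a) * rexp (-a) = rexp (-(2*a)) := by
        rw [← Real.exp_add]; ring_nf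
      have hle : rexp (-(2*a)) ≤ 1 := Real.exp_le_one_iff.2 (by linarith)
      rw [e2, ← ENNReal.ofReal_one, ← ENNReal.ofReal_sub _ (by positivity)]
    · rw [if_neg ha, ENNReal.ofReal_zero]
      have h0 : μ (X 0 ⁻¹' Iic a) = 0 := by rw [hXiIic]; simp [ha]
      have h1 : μ (X 1 ⁻¹' Iic a) = 0 := by rw [hXiIic]; simp [ha]
      refine measure_mono_null ?_ (measure_union_null h0 h1)
      intro ω hω
      simp only [mem_preimage, mem_Iic, min_le_iff] at hω
      simpa using hω
  -- independence of min and X 2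
  have hindmin : IndepFun (fun ω => min (X 0 ω) (X 1 ω)) (X 2) μ :=
    (hind.indepFun_prodMk hX 0 1 2 (by decide) (by decide)).comp
      (measurable_fst.min measurable_snd) measurable_id
  -- the law of the sum as a pushforward of a product measure
  have hmap : μ.map (fun ω => min (X 0 ω) (X 1 ω) + X 2 ω)
      = ((expMeasure 2).prod (expMeasure 1)).map (fun p : ℝ × ℝ => p.1 + p.2) := by
    rw [← hminlaw, ← hexp 2,
      ← (indepFun_iff_map_prod_eq_prod_map_map hminm.aemeasurable (hX 2).aemeasurable).1 hindmin,
      Measure.map_map measurable_add (hminm.prodMk (hX 2))]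
    rfl
  have i3 : IsProbabilityMeasure (μ.map fun ω => max (X 0 ω) (X 1 ω)) :=
    Measure.isProbabilityMeasure_map hmaxm.aemeasurable
  have i4 : IsProbabilityMeasure (μ.map fun ω => min (X 0 ω) (X 1 ω) + X 2 ω) :=
    Measure.isProbabilityMeasure_map (hminm.add (hX 2)).aemeasurable
  have i5 : IsProbabilityMeasure (expMeasure 1) := isProbabilityMeasure_expMeasure one_pos
  have i6 : IsProbabilityMeasure (expMeasure 2) := isProbabilityMeasure_expMeasure two_pos
  refine Measure.ext_of_Iic _ _ (fun x => ?_)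
  -- LHS
  have hsetmax : (fun ω => max (X 0 ω) (X 1 ω)) ⁻¹' Iic x
      = (X 0 ⁻¹' Iic x) ∩ (X 1 ⁻¹' Iic x) := by
    ext ω; simp [max_le_iff]
  rw [Measure.map_apply hmaxm measurableSet_Iic, hsetmax,
    (indepFun_iff_measure_inter_preimage_eq_mul.1 h01) _ _ measurableSet_Iic measurableSet_Iic,
    hXiIic, hXiIic]
  -- RHS
  rw [hmap, Measure.map_apply measurable_add measurableSet_Iic,
    Measure.prod_apply (measurable_add measurableSet_Iic)]
  have hsec : ∀ a : ℝ, (Prod.mk a ⁻¹' ((fun p : ℝ × ℝ => p.1 + p.2) ⁻¹' Iic x)) = Iic (x - a) := by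
    intro a; ext b; simp [le_sub_iff_add_le']
  simp_rw [hsec, expMeasure_Iic one_pos]
  have hexp2 : expMeasure 2 = volume.withDensity (exponentialPDF 2) := rfl
  have hgm : Measurable fun a : ℝ =>
      ENNReal.ofReal (if 0 ≤ x - a then 1 - rexp (-(1 * (x - a))) else 0) := by
    refine Measurable.ennreal_ofReal ?_
    exact Measurable.ite (measurableSet_le measurable_const (by fun_prop)) (by fun_prop)
      measurable_const
  have hpdfm : Measurable (exponentialPDF 2) := (measurable_exponentialPDFReal 2).ennreal_ofReal
  rw [hexp2, lintegral_withDensity_eq_lintegral_mul _ hpdfm hgm]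
  by_cases hx : 0 ≤ x
  · rw [if_pos hx]
    have hzero : ∀ a, (exponentialPDF 2 * fun a =>
        ENNReal.ofReal (if 0 ≤ x - a then 1 - rexp (-(1 * (x - a))) else 0)) a
        = (Icc 0 x).indicator (fun a => ENNReal.ofReal (2*rexp (-(2*a)) * (1 - rexp (-(x-a))))) a := by
      intro a
      simp only [Pi.mul_apply, indicator]
      by_cases h0 : a ∈ Icc 0 x
      · rw [if_pos h0]
        obtain ⟨h0a, hax⟩ := h0
        rw [exponentialPDF_of_nonneg h0a, if_pos (by linarith), one_mul,
          ← ENNReal.ofReal_mul (by positivity)]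
      · rw [if_neg h0]
        simp only [mem_Icc, not_and_or, not_le] at h0
        rcases h0 with h0 | h0
        · rw [exponentialPDF_of_neg h0, zero_mul]
        · rw [if_neg (by linarith), ENNReal.ofReal_zero, mul_zero]
    rw [lintegral_congr hzero, lintegral_indicator measurableSet_Icc]
    have hint : IntegrableOn (fun a => 2*rexp (-(2*a)) * (1 - rexp (-(x-a)))) (Icc 0 x) := by
      apply Continuous.integrableOn_Icc; continuity
    have hnn : 0 ≤ᵐ[volume.restrict (Icc 0 x)]
        fun a => 2*rexp (-(2*a)) * (1 - rexp (-(x-a))) := by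
      refine (ae_restrict_iff' measurableSet_Icc).2 (ae_of_all _ fun a ha => ?_)
      have h1 : rexp (-(x-a)) ≤ 1 := Real.exp_le_one_iff.2 (by linarith [ha.2])
      have h2 := Real.exp_pos (-(2*a))
      have h3 : (0:ℝ) ≤ 2 * rexp (-(2*a)) * (1 - rexp (-(x-a))) := by nlinarith
      simpa using h3
    rw [← ofReal_integral_eq_lintegral_ofReal hint hnn,
      MeasureTheory.integral_Icc_eq_integral_Ioc,
      ← intervalIntegral.integral_of_le hx, key_integral x,
      ← ENNReal.ofReal_mul (by
        have : rexp (-x) ≤ 1 := Real.exp_le_one_iff.2 (by linarith)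
        linarith), sq]
  · rw [if_neg hx]
    have hzero : ∀ a, (exponentialPDF 2 * fun a =>
        ENNReal.ofReal (if 0 ≤ x - a then 1 - rexp (-(1 * (x - a))) else 0)) a = 0 := by
      intro a
      simp only [Pi.mul_apply]
      by_cases h0 : 0 ≤ a
      · rw [if_neg (by push_neg at hx; linarith), ENNReal.ofReal_zero, mul_zero]
      · rw [exponentialPDF_of_neg (by linarith), zero_mul]
    rw [lintegral_congr hzero, lintegral_zero]
    simp
end

section
/- Let X₁, X₂, X₃ be i.i.d. Exp(1) random variables. Then max(X₁, X₂, X₃) and X₁/3 + max(X₂, X₃) have the same distribution. -/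
open MeasureTheory ProbabilityTheory Real Set

noncomputable def realF (t : ℝ) : ℝ := if 0 ≤ t then 1 - Real.exp (-t) else 0

lemma realF_nonneg (t : ℝ) : 0 ≤ realF t := by
  unfold realF; split_ifs with h
  · simp [Real.exp_le_one_iff.mpr (by linarith : -t ≤ 0)]
  · exact le_refl 0

lemma realF_le_one (t : ℝ) : realF t ≤ 1 := by
  unfold realF; split_ifs with h
  · have := Real.exp_pos (-t); linarith
  · norm_num

lemma measurable_realF : Measurable realF := by
  unfold realF
  exact Measurable.ite measurableSet_Ici
    (measurable_const.sub (Real.measurable_exp.comp measurable_neg)) measurable_const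

lemma realF_of_neg {t : ℝ} (h : t < 0) : realF t = 0 := if_neg (not_le.mpr h)

lemma realF_of_nonneg {t : ℝ} (h : 0 ≤ t) : realF t = 1 - Real.exp (-t) := if_pos h

lemma ftc_key (x : ℝ) :
    ∫ a in (0:ℝ)..(3*x),
      Real.exp (-a) * ((1 - Real.exp (-(x - a/3))) * (1 - Real.exp (-(x - a/3))))
      = (1 - Real.exp (-x))^3 := by
  set H : ℝ → ℝ := fun a => -Real.exp (-a) + 3 * Real.exp (-x + -2/3 * a)
      - 3 * Real.exp (-2*x + -1/3 * a) with hH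
  have hderiv : ∀ t ∈ Set.uIcc (0:ℝ) (3*x), HasDerivAt H
      (Real.exp (-t) * ((1 - Real.exp (-(x - t/3))) * (1 - Real.exp (-(x - t/3))))) t := by
    intro t _
    have d1 : HasDerivAt (fun a : ℝ => -Real.exp (-a)) (Real.exp (-t)) t := by
      simpa using (((hasDerivAt_id t).neg).exp).fun_neg
    have d2 : HasDerivAt (fun a : ℝ => Real.exp (-x + -2/3 * a))
        (Real.exp (-x + -2/3 * t) * (-2/3)) t := by
      simpa using (((hasDerivAt_id t).const_mul (-2/3 : ℝ)).const_add (-x)).exp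
    have d3 : HasDerivAt (fun a : ℝ => Real.exp (-2*x + -1/3 * a))
        (Real.exp (-2*x + -1/3 * t) * (-1/3)) t := by
      simpa using (((hasDerivAt_id t).const_mul (-1/3 : ℝ)).const_add (-2*x)).exp
    have := (d1.fun_add (d2.const_mul 3)).fun_sub (d3.const_mul 3)
    refine this.congr_deriv ?_
    have h1 : Real.exp (-x + -2/3 * t) = Real.exp (-t) * Real.exp (-(x - t/3)) := by
      rw [← Real.exp_add]; ring_nf
    have h2 : Real.exp (-2*x + -1/3 * t)
        = Real.exp (-t) * (Real.exp (-(x - t/3)) * Real.exp (-(x - t/3))) := by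
      rw [← Real.exp_add, ← Real.exp_add]; ring_nf
    rw [h1, h2]; ring
  have hint : IntervalIntegrable (fun a : ℝ =>
      Real.exp (-a) * ((1 - Real.exp (-(x - a/3))) * (1 - Real.exp (-(x - a/3)))))
      MeasureTheory.volume 0 (3*x) := by
    apply Continuous.intervalIntegrable
    continuity
  rw [intervalIntegral.integral_eq_sub_of_hasDerivAt hderiv hint]
  have A1 : Real.exp (-(3*x)) = Real.exp (-x) * (Real.exp (-x) * Real.exp (-x)) := by
    rw [← Real.exp_add, ← Real.exp_add]; ring_nf
  have A2 : Real.exp (-x + -2/3*(3*x)) = Real.exp (-x) * (Real.exp (-x) * Real.exp (-x)) := by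
    rw [← Real.exp_add, ← Real.exp_add]; ring_nf
  have A3 : Real.exp (-2*x + -1/3*(3*x)) = Real.exp (-x) * (Real.exp (-x) * Real.exp (-x)) := by
    rw [← Real.exp_add, ← Real.exp_add]; ring_nf
  have A4 : Real.exp (-2*x) = Real.exp (-x) * Real.exp (-x) := by
    rw [← Real.exp_add]; ring_nf
  simp only [hH, mul_zero, add_zero, neg_zero, Real.exp_zero, A1, A2, A3, A4]
  ring

lemma expPDFReal_of_nonneg' {a : ℝ} (h : 0 ≤ a) :
    ProbabilityTheory.exponentialPDFReal 1 a = Real.exp (-a) := by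
  simp [ProbabilityTheory.exponentialPDFReal, ProbabilityTheory.gammaPDFReal, if_pos h,
    Real.Gamma_one]

lemma expPDFReal_of_neg' {a : ℝ} (h : a < 0) :
    ProbabilityTheory.exponentialPDFReal 1 a = 0 := by
  simp [ProbabilityTheory.exponentialPDFReal, ProbabilityTheory.gammaPDFReal, if_neg (not_le.mpr h)]

lemma key_lintegral (x : ℝ) :
    ∫⁻ a, ProbabilityTheory.exponentialPDF 1 a
        * ENNReal.ofReal (realF (x - a/3) * realF (x - a/3)) ∂volume
      = ENNReal.ofReal (realF x ^ 3) := by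
  set h : ℝ → ℝ := fun a =>
    ProbabilityTheory.exponentialPDFReal 1 a * (realF (x - a/3) * realF (x - a/3)) with hh
  have hpdf_nn : ∀ a, 0 ≤ ProbabilityTheory.exponentialPDFReal 1 a :=
    ProbabilityTheory.exponentialPDFReal_nonneg one_pos
  have hmeasF : Measurable fun a : ℝ => realF (x - a/3) :=
    measurable_realF.comp (measurable_const.sub (measurable_id.div_const 3))
  have hmeas : Measurable h :=
    (ProbabilityTheory.measurable_exponentialPDFReal 1).mul (hmeasF.mul hmeasF)
  have hnn : ∀ a, 0 ≤ h a := fun a =>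
    mul_nonneg (hpdf_nn a) (mul_nonneg (realF_nonneg _) (realF_nonneg _))
  have hpdfInt : Integrable (ProbabilityTheory.exponentialPDFReal 1) volume := by
    refine ⟨(ProbabilityTheory.stronglyMeasurable_exponentialPDFReal 1).aestronglyMeasurable, ?_⟩
    rw [hasFiniteIntegral_iff_ofReal (MeasureTheory.ae_of_all _ hpdf_nn)]
    have : ∫⁻ a, ENNReal.ofReal (ProbabilityTheory.exponentialPDFReal 1 a) ∂volume
        = ∫⁻ a, ProbabilityTheory.exponentialPDF 1 a ∂volume := rfl
    rw [this, ProbabilityTheory.lintegral_exponentialPDF_eq_one one_pos]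
    exact ENNReal.one_lt_top
  have hint : Integrable h volume := by
    refine hpdfInt.mono hmeas.aestronglyMeasurable (MeasureTheory.ae_of_all _ fun a => ?_)
    rw [Real.norm_eq_abs, Real.norm_eq_abs, abs_of_nonneg (hnn a), abs_of_nonneg (hpdf_nn a)]
    simp only [hh]
    nlinarith [mul_le_one₀ (realF_le_one (x - a/3)) (realF_nonneg (x - a/3))
      (realF_le_one (x - a/3)), hpdf_nn a, realF_nonneg (x - a/3)]
  have step : ∀ a : ℝ, ProbabilityTheory.exponentialPDF 1 a
      * ENNReal.ofReal (realF (x - a/3) * realF (x - a/3)) = ENNReal.ofReal (h a) := by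
    intro a
    rw [hh]
    simp only [ProbabilityTheory.exponentialPDF]
    rw [← ENNReal.ofReal_mul (hpdf_nn a)]
  simp only [step]
  rw [← MeasureTheory.ofReal_integral_eq_lintegral_ofReal hint (MeasureTheory.ae_of_all _ hnn)]
  congr 1
  rcases lt_or_ge x 0 with hx | hx
  · have hz : ∀ a, h a = 0 := by
      intro a
      rcases lt_or_ge a 0 with ha | ha
      · simp [hh, expPDFReal_of_neg' ha]
      · have : x - a/3 < 0 := by linarith
        simp [hh, realF_of_neg this]
    simp only [hz, integral_zero]
    rw [realF_of_neg hx]; norm_num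
  · have hv : ∀ a, a ∉ Set.Icc (0:ℝ) (3*x) → h a = 0 := by
      intro a ha
      rw [Set.mem_Icc, not_and_or] at ha
      rcases ha with ha | ha
      · push_neg at ha; simp [hh, expPDFReal_of_neg' ha]
      · push_neg at ha; have : x - a/3 < 0 := by linarith
        simp [hh, realF_of_neg this]
    rw [← setIntegral_eq_integral_of_forall_compl_eq_zero hv,
      MeasureTheory.integral_Icc_eq_integral_Ioc,
      ← intervalIntegral.integral_of_le (by linarith : (0:ℝ) ≤ 3*x)]
    have hcong : Set.EqOn h (fun a =>
        Real.exp (-a) * ((1 - Real.exp (-(x - a/3))) * (1 - Real.exp (-(x - a/3)))))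
        (Set.uIcc 0 (3*x)) := by
      intro a ha
      rw [Set.uIcc_of_le (by linarith : (0:ℝ) ≤ 3*x), Set.mem_Icc] at ha
      have h1 : 0 ≤ x - a/3 := by linarith [ha.2]
      simp [hh, expPDFReal_of_nonneg' ha.1, realF_of_nonneg h1]
    rw [intervalIntegral.integral_congr hcong, ftc_key x, realF_of_nonneg hx]

open ProbabilityTheory

lemma expMeasure_Iic_s8 (t : ℝ) : expMeasure 1 (Set.Iic t) = ENNReal.ofReal (realF t) := by
  rw [show expMeasure 1 = volume.withDensity (exponentialPDF 1) from rfl,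
    withDensity_apply _ measurableSet_Iic, lintegral_exponentialPDF_eq_antiDeriv one_pos]
  simp [realF]

/-- Yanev–Chakraborty characterization, forward direction: for i.i.d. Exp(1) variables,
`max (X 0, X 1, X 2)` and `X 0 / 3 + max (X 1, X 2)` have the same distribution. -/
theorem yanev_chakraborty_forward {Ω : Type*} [MeasurableSpace Ω] (μ : Measure Ω)
    [IsProbabilityMeasure μ]
    (X : Fin 3 → Ω → ℝ) (hX : ∀ i, Measurable (X i))
    (hind : iIndepFun X μ)
    (hexp : ∀ i, μ.map (X i) = expMeasure 1) :
    μ.map (fun ω => max (X 0 ω) (max (X 1 ω) (X 2 ω))) =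
      μ.map (fun ω => X 0 ω / 3 + max (X 1 ω) (X 2 ω)) := by
  have hYm : Measurable (fun ω => max (X 1 ω) (X 2 ω)) := (hX 1).max (hX 2)
  have hL : Measurable (fun ω => max (X 0 ω) (max (X 1 ω) (X 2 ω))) := (hX 0).max hYm
  have hR : Measurable (fun ω => X 0 ω / 3 + max (X 1 ω) (X 2 ω)) :=
    ((hX 0).div_const 3).add hYm
  have hXi : ∀ (i : Fin 3) (t : ℝ), μ (X i ⁻¹' Set.Iic t) = ENNReal.ofReal (realF t) := by
    intro i t
    rw [← Measure.map_apply (hX i) measurableSet_Iic, hexp i, expMeasure_Iic_s8]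
  have hYpre : ∀ t : ℝ, (fun ω => max (X 1 ω) (X 2 ω)) ⁻¹' Set.Iic t
      = (X 1 ⁻¹' Set.Iic t) ∩ (X 2 ⁻¹' Set.Iic t) := by
    intro t; ext ω; simp [Set.mem_Iic, max_le_iff]
  have h12 : IndepFun (X 1) (X 2) μ := hind.indepFun (by decide)
  have hY : ∀ t : ℝ, μ ((fun ω => max (X 1 ω) (X 2 ω)) ⁻¹' Set.Iic t)
      = ENNReal.ofReal (realF t) * ENNReal.ofReal (realF t) := by
    intro t
    rw [hYpre t, h12.measure_inter_preimage_eq_mul _ _ measurableSet_Iic measurableSet_Iic,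
      hXi 1 t, hXi 2 t]
  have hYX0 : IndepFun (fun ω => max (X 1 ω) (X 2 ω)) (X 0) μ := by
    have := hind.indepFun_prodMk hX 1 2 0 (by decide) (by decide)
    exact this.comp (measurable_fst.max measurable_snd) measurable_id
  haveI : IsProbabilityMeasure (μ.map (fun ω => max (X 0 ω) (max (X 1 ω) (X 2 ω)))) :=
    Measure.isProbabilityMeasure_map hL.aemeasurable
  haveI : IsProbabilityMeasure (μ.map (fun ω => max (X 1 ω) (X 2 ω))) :=
    Measure.isProbabilityMeasure_map hYm.aemeasurable
  refine MeasureTheory.Measure.ext_of_Iic _ _ (fun t => ?_)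
  -- LHS
  rw [Measure.map_apply hL measurableSet_Iic]
  have hLpre : (fun ω => max (X 0 ω) (max (X 1 ω) (X 2 ω))) ⁻¹' Set.Iic t
      = (X 0 ⁻¹' Set.Iic t) ∩ ((fun ω => max (X 1 ω) (X 2 ω)) ⁻¹' Set.Iic t) := by
    ext ω; simp [Set.mem_Iic, max_le_iff]
  rw [hLpre, hYX0.symm.measure_inter_preimage_eq_mul _ _ measurableSet_Iic measurableSet_Iic,
    hXi 0 t, hY t]
  -- RHS
  have hmap : μ.map (fun ω => X 0 ω / 3 + max (X 1 ω) (X 2 ω))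
      = ((expMeasure 1).prod (μ.map (fun ω => max (X 1 ω) (X 2 ω)))).map
        (fun p : ℝ × ℝ => p.1 / 3 + p.2) := by
    have h0Y := (indepFun_iff_map_prod_eq_prod_map_map (hX 0).aemeasurable
      hYm.aemeasurable).mp hYX0.symm
    have hcomp : (fun ω => X 0 ω / 3 + max (X 1 ω) (X 2 ω))
        = (fun p : ℝ × ℝ => p.1 / 3 + p.2) ∘ (fun ω => (X 0 ω, max (X 1 ω) (X 2 ω))) := rfl
    rw [hcomp, ← Measure.map_map (g := fun p : ℝ × ℝ => p.1 / 3 + p.2) ((measurable_fst.div_const 3).add measurable_snd)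
      ((hX 0).prodMk hYm), h0Y, hexp 0]
  have hfm : Measurable (fun p : ℝ × ℝ => p.1 / 3 + p.2) :=
    (measurable_fst.div_const 3).add measurable_snd
  rw [hmap, Measure.map_apply hfm measurableSet_Iic,
    Measure.prod_apply (hfm measurableSet_Iic)]
  have hsec : ∀ a : ℝ, (Prod.mk a ⁻¹' ((fun p : ℝ × ℝ => p.1 / 3 + p.2) ⁻¹' Set.Iic t))
      = Set.Iic (t - a / 3) := by
    intro a; ext b
    simp only [Set.mem_preimage, Set.mem_Iic]
    constructor <;> intro hb <;> linarith
  have hpoint : ∀ a : ℝ, (μ.map (fun ω => max (X 1 ω) (X 2 ω)))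
      (Prod.mk a ⁻¹' ((fun p : ℝ × ℝ => p.1 / 3 + p.2) ⁻¹' Set.Iic t))
      = ENNReal.ofReal (realF (t - a / 3) * realF (t - a / 3)) := by
    intro a
    rw [hsec a, Measure.map_apply hYm measurableSet_Iic, hY,
      ENNReal.ofReal_mul (realF_nonneg _)]
  simp only [hpoint]
  have hmeasg : Measurable (fun a : ℝ => ENNReal.ofReal (realF (t - a/3) * realF (t - a/3))) := by
    apply Measurable.ennreal_ofReal
    exact ((measurable_realF.comp (measurable_const.sub (measurable_id.div_const 3))).mul
      (measurable_realF.comp (measurable_const.sub (measurable_id.div_const 3))))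
  have hpdfm : Measurable (exponentialPDF 1) := (measurable_exponentialPDFReal 1).ennreal_ofReal
  rw [show expMeasure 1 = volume.withDensity (exponentialPDF 1) from rfl,
    lintegral_withDensity_eq_lintegral_mul volume hpdfm hmeasg]
  simp only [Pi.mul_apply]
  rw [key_lintegral t, show realF t ^ 3 = realF t * (realF t * realF t) by ring,
    ENNReal.ofReal_mul (realF_nonneg t), ENNReal.ofReal_mul (realF_nonneg t)]
end
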